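/- arXiv:2402.07185 — 4 statements merged into one kernel-verified Lean document; each statement's English description precedes it below -/
import Mathlib

section
/- Let γ ∈ (0,1), σ_D > 0, A > 1, and ξ > 0. Suppose h ∈ C([0,1]) ∩ C¹([0,1)) satisfies 0 ≤ h(y) ≤ 1 for all y ∈ [0,1], h(0) = γ, h(1) = 1, and h'(y) = a₀(y) + (a₁(y)/(1−y))·h(y) + (a₂(h,y)/(1−y))·h(y)² for all y ∈ (0,1). Then ∫₀¹ (1−h(q))/(1−q) dq ∈ (0,∞) and lim_{y↑1} exp(∫₀^y (h(q)−1)/(1−q) dq) = exp(−∫₀¹ (1−h(q))/(1−q) dq) = σ_D²(A−γ)/ξ, and this value lies in (0,1). -/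
open Set Real Filter Topology

/-- `a₀(y) = γ(1+γ)/y`. -/
noncomputable def a0 (γ y : ℝ) : ℝ := γ * (1 + γ) / y

/-- `a₁(y) = ((2γ+1)y − (1+γ))/y`. -/
noncomputable def a1 (γ y : ℝ) : ℝ := ((2 * γ + 1) * y - (1 + γ)) / y

/-- `a₂(h,y) = (ξ/σ_D²)·exp(∫₀^y (h(q)−1)/(1−q) dq) − A`. -/
noncomputable def a2 (ξ σD A : ℝ) (h : ℝ → ℝ) (y : ℝ) : ℝ :=
  ξ / σD ^ 2 * Real.exp (∫ q in (0:ℝ)..y, (h q - 1) / (1 - q)) - A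

lemma blowup_aux {g g' : ℝ → ℝ} {C M : ℝ} (hM : 0 < M)
    (hd : ∀ y ∈ Ioo (0:ℝ) 1, HasDerivAt g (g' y) y)
    (hcont : ContinuousOn g' (Ioo (0:ℝ) 1))
    (hbound : ∀ y ∈ Ioo (0:ℝ) 1, g y ≤ C)
    (hev : ∀ᶠ y in 𝓝[<] (1:ℝ), M / (1 - y) ≤ g' y) : False := by
  rw [eventually_iff, mem_nhdsLT_iff_exists_Ioo_subset' (show (0:ℝ) < 1 by norm_num)]
    at hev
  obtain ⟨l, hl, hsub⟩ := hev
  simp only [mem_Iio] at hl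
  set y₀ : ℝ := max ((l + 1) / 2) (1 / 2) with hy₀def
  have hly₀ : l < y₀ := lt_max_iff.2 (Or.inl (by linarith))
  have hy₀0 : 0 < y₀ := lt_max_iff.2 (Or.inr (by norm_num))
  have hy₀1 : y₀ < 1 := max_lt (by linarith) (by norm_num)
  have key : ∀ y ∈ Ioo y₀ 1, g y₀ + M * (Real.log (1 - y₀) - Real.log (1 - y)) ≤ g y := by
    intro y hy
    have hy₀y : y₀ ≤ y := le_of_lt hy.1
    have hsubI : Icc y₀ y ⊆ Ioo (0:ℝ) 1 := fun q hq =>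
      ⟨lt_of_lt_of_le hy₀0 hq.1, lt_of_le_of_lt hq.2 hy.2⟩
    have hgint : IntervalIntegrable g' MeasureTheory.volume y₀ y :=
      ContinuousOn.intervalIntegrable_of_Icc hy₀y (hcont.mono hsubI)
    have hftc : g y - g y₀ = ∫ q in y₀..y, g' q := by
      refine (intervalIntegral.integral_eq_sub_of_hasDerivAt (fun x hx => ?_) hgint).symm
      exact hd x (hsubI (by rwa [uIcc_of_le hy₀y] at hx))
    have hw : ∀ q ∈ Icc y₀ y, HasDerivAt (fun q => -M * Real.log (1 - q)) (M / (1 - q)) q := by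
      intro q hq
      have h1q : (1:ℝ) - q ≠ 0 := by
        have := (hsubI hq).2; intro hcontra; linarith [sub_eq_zero.1 hcontra]
      have h2 : HasDerivAt (fun q : ℝ => Real.log (1 - q)) ((-1) / (1 - q)) q :=
        ((hasDerivAt_id q).const_sub 1).log h1q
      have h3 := h2.const_mul (-M)
      exact h3.congr_deriv (by ring)
    have hwint : IntervalIntegrable (fun q => M / (1 - q)) MeasureTheory.volume y₀ y := by
      apply ContinuousOn.intervalIntegrable_of_Icc hy₀y
      apply continuousOn_const.div (continuousOn_const.sub continuousOn_id)
      intro q hq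
      have h10 := (hsubI hq).2
      intro hcontra; simp only [Pi.sub_apply, id_eq] at hcontra; linarith [sub_eq_zero.1 hcontra]
    have hwftc : (∫ q in y₀..y, M / (1 - q)) =
        -M * Real.log (1 - y) - -M * Real.log (1 - y₀) := by
      refine intervalIntegral.integral_eq_sub_of_hasDerivAt
        (f := fun q => -M * Real.log (1 - q)) (f' := fun q => M / (1 - q))
        (fun x hx => ?_) hwint
      exact hw x (by rwa [uIcc_of_le hy₀y] at hx)
    have hmono : (∫ q in y₀..y, M / (1 - q)) ≤ ∫ q in y₀..y, g' q := by
      refine intervalIntegral.integral_mono_on hy₀y hwint hgint (fun x hx => ?_)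
      exact hsub ⟨lt_of_lt_of_le hly₀ hx.1, lt_of_le_of_lt hx.2 hy.2⟩
    rw [hwftc] at hmono
    nlinarith [hmono, hftc]
  have hlog : Tendsto (fun y : ℝ => Real.log (1 - y)) (𝓝[<] (1:ℝ)) atBot := by
    apply Real.tendsto_log_nhdsGT_zero.comp
    apply tendsto_nhdsWithin_of_tendsto_nhds_of_eventually_within
    · have h5 : Tendsto (fun y : ℝ => 1 - y) (𝓝 1) (𝓝 0) :=
        (continuous_const.sub continuous_id).tendsto' 1 0 (by norm_num)
      exact h5.mono_left nhdsWithin_le_nhds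
    · filter_upwards [self_mem_nhdsWithin] with y hy
      simp only [mem_Iio] at hy
      simp only [mem_Ioi]
      linarith
  have hK : ∀ᶠ y in 𝓝[<] (1:ℝ),
      Real.log (1 - y) < Real.log (1 - y₀) - (C + 1 - g y₀) / M :=
    hlog.eventually_lt_atBot _
  obtain ⟨y, hKy, hmemy⟩ :=
    (hK.and (eventually_of_mem (Ioo_mem_nhdsLT hy₀1) (fun x hx => hx))).exists
  have h6 := key y hmemy
  have h7 := hbound y ⟨lt_trans hy₀0 hmemy.1, hmemy.2⟩
  have h8 : M * (Real.log (1 - y₀) - Real.log (1 - y)) > C + 1 - g y₀ := by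
    have h9 : Real.log (1 - y₀) - Real.log (1 - y) > (C + 1 - g y₀) / M := by linarith
    calc M * (Real.log (1 - y₀) - Real.log (1 - y)) > M * ((C + 1 - g y₀) / M) :=
          (mul_lt_mul_iff_right₀ hM).2 h9
      _ = C + 1 - g y₀ := by field_simp
  linarith

/-- If `h ∈ C([0,1]) ∩ C¹([0,1))` with `0 ≤ h ≤ 1` solves the
path-dependent Riccati ODE with `h 0 = γ`, `h 1 = 1`, then the integral
`∫₀¹ (1−h(q))/(1−q) dq` is finite and positive, and
`lim_{y↑1} exp(∫₀^y (h(q)−1)/(1−q) dq) = exp(−∫₀¹ (1−h(q))/(1−q) dq) = σ_D²(A−γ)/ξ ∈ (0,1)`. -/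
theorem stmt14 (γ σD A ξ : ℝ) (hγ : γ ∈ Ioo (0:ℝ) 1) (hσ : 0 < σD)
    (hA : 1 < A) (hξ : 0 < ξ)
    (h h' : ℝ → ℝ)
    (hc : ContinuousOn h (Icc (0:ℝ) 1))
    (hc' : ContinuousOn h' (Ico (0:ℝ) 1))
    (hd : ∀ y ∈ Ico (0:ℝ) 1, HasDerivWithinAt h (h' y) (Ico (0:ℝ) 1) y)
    (hbd : ∀ y ∈ Icc (0:ℝ) 1, 0 ≤ h y ∧ h y ≤ 1)
    (h0 : h 0 = γ) (h1 : h 1 = 1)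
    (hode : ∀ y ∈ Ioo (0:ℝ) 1,
      h' y = a0 γ y + a1 γ y / (1 - y) * h y + a2 ξ σD A h y / (1 - y) * h y ^ 2) :
    IntervalIntegrable (fun q => (1 - h q) / (1 - q)) MeasureTheory.volume 0 1 ∧
    (0 < ∫ q in (0:ℝ)..1, (1 - h q) / (1 - q)) ∧
    Tendsto (fun y => Real.exp (∫ q in (0:ℝ)..y, (h q - 1) / (1 - q)))
      (𝓝[<] (1:ℝ)) (𝓝 (σD ^ 2 * (A - γ) / ξ)) ∧
    Real.exp (-∫ q in (0:ℝ)..1, (1 - h q) / (1 - q)) = σD ^ 2 * (A - γ) / ξ ∧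
    σD ^ 2 * (A - γ) / ξ ∈ Ioo (0:ℝ) 1 := by
  obtain ⟨hγ0, hγ1⟩ := hγ
  have hσ2 : (0:ℝ) < σD ^ 2 := by positivity
  set c : ℝ := ξ / σD ^ 2 with hcdef
  have hc0 : 0 < c := by positivity
  set f : ℝ → ℝ := fun q => (1 - h q) / (1 - q) with hfdef
  have hfc : ContinuousOn f (Ico (0:ℝ) 1) := by
    apply ContinuousOn.div (continuousOn_const.sub (hc.mono Ico_subset_Icc_self))
      (continuousOn_const.sub continuousOn_id)
    intro q hq
    have h2 := hq.2
    simp only [Pi.sub_apply, id_eq]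
    intro hcontra; linarith [sub_eq_zero.1 hcontra]
  have hfnn : ∀ q ∈ Ico (0:ℝ) 1, 0 ≤ f q := fun q hq =>
    div_nonneg (by linarith [(hbd q (Ico_subset_Icc_self hq)).2]) (by linarith [hq.2])
  have hf1 : f 1 = 0 := by rw [hfdef]; simp [h1]
  have hfnn' : ∀ q ∈ Icc (0:ℝ) 1, 0 ≤ f q := by
    intro q hq
    rcases eq_or_lt_of_le hq.2 with hq1 | hq1
    · rw [hq1, hf1]
    · exact hfnn q ⟨hq.1, hq1⟩
  have hfint : ∀ y ∈ Ico (0:ℝ) 1, IntervalIntegrable f MeasureTheory.volume 0 y := fun y hy =>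
    ContinuousOn.intervalIntegrable_of_Icc hy.1
      (hfc.mono (fun q hq => ⟨hq.1, lt_of_le_of_lt hq.2 hy.2⟩))
  set G : ℝ → ℝ := fun y => ∫ q in (0:ℝ)..y, f q with hGdef
  have hGmono : MonotoneOn G (Ico (0:ℝ) 1) := by
    intro x hx y hy hxy
    have hxyint : IntervalIntegrable f MeasureTheory.volume x y :=
      ContinuousOn.intervalIntegrable_of_Icc hxy
        (hfc.mono (fun q hq => ⟨le_trans hx.1 hq.1, lt_of_le_of_lt hq.2 hy.2⟩))
    have hadd : G x + ∫ q in x..y, f q = G y :=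
      intervalIntegral.integral_add_adjacent_intervals (hfint x hx) hxyint
    have hnn : 0 ≤ ∫ q in x..y, f q :=
      intervalIntegral.integral_nonneg hxy
        (fun u hu => hfnn u ⟨le_trans hx.1 hu.1, lt_of_le_of_lt hu.2 hy.2⟩)
    linarith
  have hInt : ∀ y : ℝ, (∫ q in (0:ℝ)..y, (h q - 1) / (1 - q)) = -(G y) := by
    intro y
    rw [hGdef]
    simp only [← intervalIntegral.integral_neg]
    congr 1
    funext q
    rw [hfdef]
    simp only
    rw [← neg_div]
    congr 1
    ring
  have ha2eq : ∀ y : ℝ, a2 ξ σD A h y = c * Real.exp (-(G y)) - A := by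
    intro y
    rw [a2, hInt y, hcdef]
  set Fm : ℝ → ℝ := fun y => Real.exp (-(G (max y 0))) with hFmdef
  have hFmAnti : AntitoneOn Fm (Iio (1:ℝ)) := by
    intro x hx y hy hxy
    simp only [hFmdef, Real.exp_le_exp, neg_le_neg_iff]
    exact hGmono ⟨le_max_right _ _, max_lt hx zero_lt_one⟩
      ⟨le_max_right _ _, max_lt hy zero_lt_one⟩ (max_le_max hxy le_rfl)
  have hbdd : BddBelow (Fm '' Iio (1:ℝ)) := by
    refine ⟨0, fun z hz => ?_⟩
    obtain ⟨y, _, rfl⟩ := hz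
    exact (Real.exp_pos _).le
  set L : ℝ := sInf (Fm '' Iio (1:ℝ)) with hLdef
  have hFmT : Tendsto Fm (𝓝[<] (1:ℝ)) (𝓝 L) := hFmAnti.tendsto_nhdsLT hbdd
  have hIcoMem : Ico (0:ℝ) 1 ∈ 𝓝[<] (1:ℝ) := by
    rw [← nhdsWithin_Ico_eq_nhdsLT (show (0:ℝ) < 1 by norm_num)]
    exact self_mem_nhdsWithin
  have hFT : Tendsto (fun y => Real.exp (-(G y))) (𝓝[<] (1:ℝ)) (𝓝 L) := by
    apply hFmT.congr'
    filter_upwards [hIcoMem] with y hy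
    rw [hFmdef]
    simp only
    rw [max_eq_left hy.1]
  have hhT : Tendsto h (𝓝[<] (1:ℝ)) (𝓝 1) := by
    rw [← nhdsWithin_Ico_eq_nhdsLT (show (0:ℝ) < 1 by norm_num)]
    have h2 : Tendsto h (𝓝[Icc (0:ℝ) 1] 1) (𝓝 (h 1)) :=
      hc 1 (by norm_num : (1:ℝ) ∈ Icc (0:ℝ) 1)
    rw [h1] at h2
    exact h2.mono_left (nhdsWithin_mono 1 Ico_subset_Icc_self)
  set M : ℝ := γ - A + c * L with hMdef
  have hφev : (fun y : ℝ => (1 - y) * a0 γ y + a1 γ y * h y +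
      (c * Real.exp (-(G y)) - A) * h y ^ 2) =ᶠ[𝓝[<] (1:ℝ)]
      (fun y => (1 - y) * h' y) := by
    filter_upwards [Ioo_mem_nhdsLT (show (0:ℝ) < 1 by norm_num)] with y hyo
    rw [hode y hyo, ha2eq y]
    have h1y : (1:ℝ) - y ≠ 0 := by
      have := hyo.2; intro hcontra; linarith [sub_eq_zero.1 hcontra]
    field_simp
  have hφT : Tendsto (fun y => (1 - y) * h' y) (𝓝[<] (1:ℝ)) (𝓝 M) := by
    have t1 : Tendsto (fun y : ℝ => 1 - y) (𝓝[<] (1:ℝ)) (𝓝 0) :=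
      ((continuous_const.sub continuous_id).tendsto' 1 0 (by norm_num)).mono_left
        nhdsWithin_le_nhds
    have t2 : Tendsto (fun y : ℝ => a0 γ y) (𝓝[<] (1:ℝ)) (𝓝 (γ * (1 + γ))) := by
      have t : Tendsto (fun y : ℝ => γ * (1 + γ) / y) (𝓝 (1:ℝ)) (𝓝 (γ * (1 + γ) / 1)) :=
        tendsto_const_nhds.div tendsto_id one_ne_zero
      rw [div_one] at t
      simp only [a0]
      exact t.mono_left nhdsWithin_le_nhds
    have t3 : Tendsto (fun y : ℝ => a1 γ y) (𝓝[<] (1:ℝ)) (𝓝 γ) := by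
      have t : Tendsto (fun y : ℝ => ((2 * γ + 1) * y - (1 + γ)) / y) (𝓝 (1:ℝ))
          (𝓝 (((2 * γ + 1) * 1 - (1 + γ)) / 1)) :=
        ((tendsto_const_nhds.mul tendsto_id).sub tendsto_const_nhds).div tendsto_id one_ne_zero
      have heq : ((2 * γ + 1) * 1 - (1 + γ)) / 1 = γ := by ring
      rw [heq] at t
      simp only [a1]
      exact t.mono_left nhdsWithin_le_nhds
    have tc : Tendsto (fun y : ℝ => c * Real.exp (-(G y)) - A) (𝓝[<] (1:ℝ))
        (𝓝 (c * L - A)) :=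
      ((tendsto_const_nhds : Tendsto (fun _ : ℝ => c) (𝓝[<] (1:ℝ)) (𝓝 c)).mul hFT).sub
        (tendsto_const_nhds : Tendsto (fun _ : ℝ => A) (𝓝[<] (1:ℝ)) (𝓝 A))
    have tall := ((t1.mul t2).add (t3.mul hhT)).add (tc.mul (hhT.pow 2))
    have heq2 : (0 * (γ * (1 + γ)) + γ * 1 + (c * L - A) * 1 ^ 2) = M := by
      rw [hMdef]; ring
    rw [heq2] at tall
    exact tall.congr' hφev
  have hM0 : M = 0 := by
    by_contra hMne
    rcases lt_or_gt_of_ne hMne with hMneg | hMpos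
    · refine blowup_aux (g := fun y => -(h y)) (g' := fun y => -(h' y)) (C := 0)
        (M := -M / 2) (by linarith) ?_ ?_ ?_ ?_
      · intro y hy
        exact ((hd y (Ioo_subset_Ico_self hy)).hasDerivAt
          (Ico_mem_nhds hy.1 hy.2)).neg
      · exact (hc'.mono Ioo_subset_Ico_self).neg
      · intro y hy
        have := (hbd y ⟨le_of_lt hy.1, le_of_lt hy.2⟩).1
        linarith
      · filter_upwards [hφT.eventually (eventually_lt_nhds (show M < M / 2 by linarith)),
          Ioo_mem_nhdsLT (show (0:ℝ) < 1 by norm_num)] with y hlt hy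
        rw [div_le_iff₀ (show (0:ℝ) < 1 - y by linarith [hy.2])]
        nlinarith [hlt]
    · refine blowup_aux (g := h) (g' := h') (C := 1) (M := M / 2) (by linarith) ?_ ?_ ?_ ?_
      · intro y hy
        exact (hd y (Ioo_subset_Ico_self hy)).hasDerivAt (Ico_mem_nhds hy.1 hy.2)
      · exact hc'.mono Ioo_subset_Ico_self
      · intro y hy
        exact (hbd y ⟨le_of_lt hy.1, le_of_lt hy.2⟩).2
      · filter_upwards [hφT.eventually (eventually_gt_nhds (show M / 2 < M by linarith)),
          Ioo_mem_nhdsLT (show (0:ℝ) < 1 by norm_num)] with y hgt hy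
        rw [div_le_iff₀ (show (0:ℝ) < 1 - y by linarith [hy.2])]
        nlinarith [hgt]
  have hLval : L = σD ^ 2 * (A - γ) / ξ := by
    have h9 : γ - A + c * L = 0 := by rw [← hMdef]; exact hM0
    rw [hcdef] at h9
    rw [eq_div_iff (ne_of_gt hξ)]
    field_simp at h9
    nlinarith [h9]
  have hL0 : 0 < L := by
    rw [hLval]
    exact div_pos (mul_pos hσ2 (by linarith)) hξ
  have hGbd : ∀ y ∈ Ico (0:ℝ) 1, G y ≤ -Real.log L := by
    intro y hy
    have hFmy : Fm y = Real.exp (-(G y)) := by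
      rw [hFmdef]; simp only; rw [max_eq_left hy.1]
    have hle : L ≤ Real.exp (-(G y)) := by
      rw [← hFmy]
      exact csInf_le hbdd ⟨y, hy.2, rfl⟩
    have hlog := Real.log_le_log hL0 hle
    rw [Real.log_exp] at hlog
    linarith
  set bseq : ℕ → ℝ := fun n => 1 - 1 / ((n : ℝ) + 1) with hbseqdef
  have hbmem : ∀ n : ℕ, bseq n ∈ Ico (0:ℝ) 1 := by
    intro n
    have hn1 : (0:ℝ) < (n : ℝ) + 1 := by positivity
    constructor
    · have : 1 / ((n : ℝ) + 1) ≤ 1 := by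
        rw [div_le_one hn1]; linarith [Nat.cast_nonneg (α := ℝ) n]
      simp only [hbseqdef]; linarith
    · have : 0 < 1 / ((n : ℝ) + 1) := by positivity
      simp only [hbseqdef]; linarith
  have hbT : Tendsto bseq atTop (𝓝 (1:ℝ)) := by
    have t := tendsto_one_div_add_atTop_nhds_zero_nat (𝕜 := ℝ)
    have t2 := (tendsto_const_nhds : Tendsto (fun _ : ℕ => (1:ℝ)) atTop (𝓝 1)).sub t
    rw [sub_zero] at t2
    exact t2
  have hIntOn : MeasureTheory.IntegrableOn f (Ioc (0:ℝ) 1) MeasureTheory.volume := by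
    refine MeasureTheory.integrableOn_Ioc_of_intervalIntegral_norm_bounded_right
      (I := -Real.log L) (fun n => (hfint (bseq n) (hbmem n)).1) hbT ?_
    filter_upwards with n
    have hnorm : (∫ x in Ioc (0:ℝ) (bseq n), ‖f x‖) = ∫ x in Ioc (0:ℝ) (bseq n), f x := by
      refine MeasureTheory.setIntegral_congr_fun measurableSet_Ioc (fun x hx => ?_)
      exact Real.norm_of_nonneg (hfnn x ⟨le_of_lt hx.1, lt_of_le_of_lt hx.2 (hbmem n).2⟩)
    rw [hnorm, ← intervalIntegral.integral_of_le (hbmem n).1]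
    exact hGbd (bseq n) (hbmem n)
  have hII : IntervalIntegrable f MeasureTheory.volume 0 1 :=
    (intervalIntegrable_iff_integrableOn_Ioc_of_le zero_le_one).2 hIntOn
  have hGT : Tendsto G (𝓝[<] (1:ℝ)) (𝓝 (∫ q in (0:ℝ)..1, f q)) := by
    have hIcc : MeasureTheory.IntegrableOn f (Icc (0:ℝ) 1) MeasureTheory.volume :=
      (integrableOn_Icc_iff_integrableOn_Ioc).2 hIntOn
    have hcont2 := intervalIntegral.continuousOn_primitive hIcc
    have h3 : Tendsto (fun x => ∫ t in Ioc (0:ℝ) x, f t) (𝓝[Icc (0:ℝ) 1] 1)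
        (𝓝 (∫ t in Ioc (0:ℝ) 1, f t)) := hcont2 1 (by norm_num)
    have h4 : Tendsto (fun x => ∫ t in Ioc (0:ℝ) x, f t) (𝓝[<] (1:ℝ))
        (𝓝 (∫ t in Ioc (0:ℝ) 1, f t)) := by
      rw [← nhdsWithin_Ico_eq_nhdsLT (show (0:ℝ) < 1 by norm_num)]
      exact h3.mono_left (nhdsWithin_mono 1 Ico_subset_Icc_self)
    have h5 : (∫ t in Ioc (0:ℝ) 1, f t) = ∫ q in (0:ℝ)..1, f q :=
      (intervalIntegral.integral_of_le zero_le_one).symm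
    rw [h5] at h4
    apply h4.congr'
    filter_upwards [hIcoMem] with y hy
    exact (intervalIntegral.integral_of_le hy.1).symm
  have hExpT : Tendsto (fun y => Real.exp (-(G y))) (𝓝[<] (1:ℝ))
      (𝓝 (Real.exp (-(∫ q in (0:ℝ)..1, f q)))) :=
    (Real.continuous_exp.continuousAt.tendsto).comp hGT.neg
  have hexpEq : Real.exp (-(∫ q in (0:ℝ)..1, f q)) = L := tendsto_nhds_unique hExpT hFT
  -- positivity of the integral
  have hIpos : 0 < ∫ q in (0:ℝ)..1, f q := by
    have hcw : Tendsto h (𝓝[Icc (0:ℝ) 1] 0) (𝓝 γ) := by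
      have hcw0 : Tendsto h (𝓝[Icc (0:ℝ) 1] 0) (𝓝 (h 0)) :=
        hc 0 (by norm_num : (0:ℝ) ∈ Icc (0:ℝ) 1)
      rwa [h0] at hcw0
    have hev0 : ∀ᶠ q in 𝓝[Icc (0:ℝ) 1] 0, h q < (1 + γ) / 2 :=
      hcw.eventually (eventually_lt_nhds (by linarith))
    rw [eventually_iff, mem_nhdsWithin] at hev0
    obtain ⟨u, huopen, hu0, husub⟩ := hev0
    obtain ⟨ε, hε, hball⟩ := Metric.isOpen_iff.1 huopen 0 hu0
    set δ : ℝ := min (ε / 2) (1 / 2) with hδdef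
    have hδ0 : 0 < δ := lt_min (by linarith) (by norm_num)
    have hδ1 : δ < 1 := lt_of_le_of_lt (min_le_right _ _) (by norm_num)
    have hpos : ∀ x ∈ Ioo (0:ℝ) δ, 0 < f x := by
      intro x hx
      have hxu : x ∈ u := by
        apply hball
        rw [Metric.mem_ball, Real.dist_eq, sub_zero, abs_of_pos hx.1]
        exact lt_of_lt_of_le hx.2 (le_trans (min_le_left _ _) (by linarith))
      have hxIcc : x ∈ Icc (0:ℝ) 1 := ⟨le_of_lt hx.1, by linarith [hx.2]⟩
      have hhx : h x < (1 + γ) / 2 := husub ⟨hxu, hxIcc⟩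
      rw [hfdef]
      simp only
      apply div_pos (by linarith) (by linarith [hx.2, hδ1])
    have hint1 : 0 < ∫ q in (0:ℝ)..δ, f q :=
      intervalIntegral.intervalIntegral_pos_of_pos_on
        (hfint δ ⟨le_of_lt hδ0, hδ1⟩) hpos hδ0
    have hint2 : 0 ≤ ∫ q in δ..1, f q :=
      intervalIntegral.integral_nonneg (le_of_lt hδ1)
        (fun u hu => hfnn' u ⟨le_trans (le_of_lt hδ0) hu.1, hu.2⟩)
    have hint2' : IntervalIntegrable f MeasureTheory.volume δ 1 := by
      apply hII.mono_set
      rw [uIcc_of_le (le_of_lt hδ1), uIcc_of_le zero_le_one]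
      exact Icc_subset_Icc (le_of_lt hδ0) le_rfl
    have hadd : (∫ q in (0:ℝ)..δ, f q) + ∫ q in δ..1, f q = ∫ q in (0:ℝ)..1, f q :=
      intervalIntegral.integral_add_adjacent_intervals (hfint δ ⟨le_of_lt hδ0, hδ1⟩) hint2'
    linarith
  refine ⟨hII, hIpos, ?_, ?_, ?_⟩
  · simp only [hInt]
    rw [show σD ^ 2 * (A - γ) / ξ = L from hLval.symm]
    exact hFT
  · rw [← hLval]
    exact hexpEq
  · constructor
    · rw [← hLval]; exact hL0
    · rw [← hLval, ← hexpEq]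
      calc Real.exp (-(∫ q in (0:ℝ)..1, f q)) < Real.exp 0 :=
            Real.exp_lt_exp.2 (by linarith)
        _ = 1 := Real.exp_zero
end

section
/- Let γ ∈ (0,1), σ_D > 0, A > 1, and ξ > 0. Suppose h ∈ C([0,1]) ∩ C¹([0,1)) satisfies 0 ≤ h(y) ≤ 1 for all y ∈ [0,1], h(0) = γ, h(1) = 1, and h'(y) = a₀(y) + (a₁(y)/(1−y))·h(y) + (a₂(h,y)/(1−y))·h(y)² for all y ∈ (0,1). Then h(y) ≥ γ for all y ∈ [0,1]. -/
open Set Real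
open MeasureTheory

/-- The inner integral in `a2`. -/
noncomputable def II (h : ℝ → ℝ) (y : ℝ) : ℝ := ∫ q in (0:ℝ)..y, (h q - 1) / (1 - q)

lemma a2_eq (ξ σD A : ℝ) (h : ℝ → ℝ) (y : ℝ) :
    a2 ξ σD A h y = ξ / σD ^ 2 * Real.exp (II h y) - A := rfl

/-- The coefficient of the linear term in the ODE for `h - γ`. -/
noncomputable def cc (γ ξ σD A : ℝ) (h : ℝ → ℝ) (y : ℝ) : ℝ :=
  (a1 γ y + a2 ξ σD A h y * (h y + γ)) / (1 - y)

section aux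

variable {γ σD A ξ : ℝ} {h h' : ℝ → ℝ}

lemma integrand_contOn (hc : ContinuousOn h (Icc (0:ℝ) 1)) :
    ContinuousOn (fun q => (h q - 1) / (1 - q)) (Ico (0:ℝ) 1) := by
  apply ContinuousOn.div
  · exact ((hc.mono Ico_subset_Icc_self).sub continuousOn_const)
  · exact (continuousOn_const.sub continuousOn_id)
  · intro q hq
    exact sub_ne_zero.2 hq.2.ne'

lemma integrand_intble (hc : ContinuousOn h (Icc (0:ℝ) 1))
    {x y : ℝ} (hx : x ∈ Ico (0:ℝ) 1) (hy : y ∈ Ico (0:ℝ) 1) :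
    IntervalIntegrable (fun q => (h q - 1) / (1 - q)) volume x y :=
  ((integrand_contOn hc).mono (Set.ordConnected_Ico.uIcc_subset hx hy)).intervalIntegrable

lemma II_anti (hc : ContinuousOn h (Icc (0:ℝ) 1))
    (hbd : ∀ y ∈ Icc (0:ℝ) 1, 0 ≤ h y ∧ h y ≤ 1)
    {x y : ℝ} (hx : x ∈ Ico (0:ℝ) 1) (hy : y ∈ Ico (0:ℝ) 1) (hxy : x ≤ y) :
    II h y ≤ II h x := by
  have h0 : (0:ℝ) ∈ Ico (0:ℝ) 1 := ⟨le_refl _, one_pos⟩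
  have hsplit : II h x + ∫ q in x..y, (h q - 1) / (1 - q) = II h y :=
    intervalIntegral.integral_add_adjacent_intervals (integrand_intble hc h0 hx)
      (integrand_intble hc hx hy)
  have hneg : (∫ q in x..y, (h q - 1) / (1 - q)) ≤ 0 := by
    have := intervalIntegral.integral_mono_on (μ := volume) hxy (integrand_intble hc hx hy)
      (intervalIntegrable_const (c := (0:ℝ))) ?_
    · simpa using this
    · intro q hq
      have hq1 : q < 1 := lt_of_le_of_lt hq.2 hy.2
      have hq0 : 0 ≤ q := le_trans hx.1 hq.1
      have hb := (hbd q ⟨hq0, hq1.le⟩).2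
      exact div_nonpos_iff.2 (Or.inr ⟨by linarith, by linarith⟩)
  linarith

lemma II_nonpos (hc : ContinuousOn h (Icc (0:ℝ) 1))
    (hbd : ∀ y ∈ Icc (0:ℝ) 1, 0 ≤ h y ∧ h y ≤ 1)
    {y : ℝ} (hy : y ∈ Ico (0:ℝ) 1) : II h y ≤ 0 := by
  have := II_anti hc hbd (x := 0) ⟨le_refl _, one_pos⟩ hy hy.1
  simpa [II] using this

lemma a2_anti (hσ : 0 < σD) (hξ : 0 < ξ) (hc : ContinuousOn h (Icc (0:ℝ) 1))
    (hbd : ∀ y ∈ Icc (0:ℝ) 1, 0 ≤ h y ∧ h y ≤ 1)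
    {x y : ℝ} (hx : x ∈ Ico (0:ℝ) 1) (hy : y ∈ Ico (0:ℝ) 1) (hxy : x ≤ y) :
    a2 ξ σD A h y ≤ a2 ξ σD A h x := by
  rw [a2_eq, a2_eq]
  have hpos : 0 < ξ / σD ^ 2 := div_pos hξ (by positivity)
  have := Real.exp_le_exp.2 (II_anti hc hbd hx hy hxy)
  nlinarith

lemma a2_lb (hσ : 0 < σD) (hξ : 0 < ξ) (y : ℝ) : -A < a2 ξ σD A h y := by
  rw [a2_eq]
  have hpos : 0 < ξ / σD ^ 2 := div_pos hξ (by positivity)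
  nlinarith [Real.exp_pos (II h y)]

lemma a2_ub (hσ : 0 < σD) (hξ : 0 < ξ) (hc : ContinuousOn h (Icc (0:ℝ) 1))
    (hbd : ∀ y ∈ Icc (0:ℝ) 1, 0 ≤ h y ∧ h y ≤ 1)
    {y : ℝ} (hy : y ∈ Ico (0:ℝ) 1) : a2 ξ σD A h y ≤ ξ / σD ^ 2 - A := by
  rw [a2_eq]
  have hpos : 0 < ξ / σD ^ 2 := div_pos hξ (by positivity)
  have : Real.exp (II h y) ≤ 1 := Real.exp_le_one_iff.2 (II_nonpos hc hbd hy)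
  nlinarith

lemma a2_contAt (hc : ContinuousOn h (Icc (0:ℝ) 1))
    {y : ℝ} (hy : y ∈ Ioo (0:ℝ) 1) : ContinuousAt (a2 ξ σD A h) y := by
  have hIc : ContinuousAt (II h) y := by
    have := intervalIntegral.integral_hasDerivAt_right
      (integrand_intble hc ⟨le_refl _, one_pos⟩ ⟨hy.1.le, hy.2⟩)
      (((integrand_contOn hc).mono Ioo_subset_Ico_self).stronglyMeasurableAtFilter
        isOpen_Ioo y hy)
      (((integrand_contOn hc).mono Ioo_subset_Ico_self).continuousAt (Ioo_mem_nhds hy.1 hy.2))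
    exact this.continuousAt
  have : a2 ξ σD A h = fun y => ξ / σD ^ 2 * Real.exp (II h y) - A := rfl
  rw [this]
  exact (continuousAt_const.mul (Real.continuous_exp.continuousAt.comp hIc)).sub
    continuousAt_const

lemma key_identity {y : ℝ} (hy : y ∈ Ioo (0:ℝ) 1)
    (hode : h' y = a0 γ y + a1 γ y / (1 - y) * h y + a2 ξ σD A h y / (1 - y) * h y ^ 2) :
    h' y - cc γ ξ σD A h y * (h y - γ)
      = γ ^ 2 * (1 + a2 ξ σD A h y) / (1 - y) := by
  have h0 : y ≠ 0 := hy.1.ne'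
  have h1 : (1:ℝ) - y ≠ 0 := sub_ne_zero.2 hy.2.ne'
  rw [hode]
  simp only [cc, a0, a1]
  field_simp
  ring

lemma cc_contAt (hc : ContinuousOn h (Icc (0:ℝ) 1))
    (ha2 : ∀ y ∈ Ioo (0:ℝ) 1, ContinuousAt (a2 ξ σD A h) y)
    {y : ℝ} (hy : y ∈ Ioo (0:ℝ) 1) : ContinuousAt (cc γ ξ σD A h) y := by
  have hh : ContinuousAt h y := hc.continuousAt (Icc_mem_nhds hy.1 hy.2)
  have ha1 : ContinuousAt (a1 γ) y := by
    have : a1 γ = fun y => ((2 * γ + 1) * y - (1 + γ)) / y := rfl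
    rw [this]
    exact ContinuousAt.div (by fun_prop) continuousAt_id hy.1.ne'
  have : cc γ ξ σD A h = fun y => (a1 γ y + a2 ξ σD A h y * (h y + γ)) / (1 - y) := rfl
  rw [this]
  exact ContinuousAt.div (ha1.add ((ha2 y hy).mul (hh.add continuousAt_const)))
    (continuousAt_const.sub continuousAt_id) (sub_ne_zero.2 hy.2.ne')

/-- Pointwise upper bound on `cc` used in the Grönwall estimate near `0`. -/
lemma cc_upper (hγ0 : 0 < γ) (hγ1 : γ < 1) (hσ : 0 < σD) (hA : 1 < A) (hξ : 0 < ξ)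
    (hc : ContinuousOn h (Icc (0:ℝ) 1))
    (hbd : ∀ y ∈ Icc (0:ℝ) 1, 0 ≤ h y ∧ h y ≤ 1)
    {y₀ t : ℝ} (hy₀ : y₀ ∈ Ioo (0:ℝ) 1) (ht : t ∈ Ioo (0:ℝ) 1) (hty : t ≤ y₀) :
    cc γ ξ σD A h t ≤ ((2*γ+1) + 2*(ξ/σD^2 + A)) / (1 - y₀) - (1+γ) * (1/t) := by
  set K : ℝ := ((2*γ+1) + 2*(ξ/σD^2 + A)) / (1 - y₀) with hK
  have ht0 : 0 < t := ht.1
  have ht1 : 0 < 1 - t := by linarith [ht.2]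
  have hy₀1 : 0 < 1 - y₀ := by linarith [hy₀.2]
  have hξσ : 0 < ξ/σD^2 := div_pos hξ (by positivity)
  have hAξ : 0 < ξ/σD^2 + A := by linarith
  have hKnn : 0 ≤ K := le_of_lt (div_pos (by linarith) hy₀1)
  have hKmul : K * (1 - y₀) = (2*γ+1) + 2*(ξ/σD^2 + A) := by
    rw [hK, div_mul_cancel₀ _ hy₀1.ne']
  have hbt := hbd t ⟨ht0.le, ht.2.le⟩
  have hB : a2 ξ σD A h t * (h t + γ) ≤ 2*(ξ/σD^2 + A) := by
    have hub : a2 ξ σD A h t ≤ ξ/σD^2 + A := by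
      have := a2_ub (A := A) hσ hξ hc hbd (y := t) ⟨ht0.le, ht.2⟩
      linarith
    have hhγ0 : 0 ≤ h t + γ := by linarith [hbt.1]
    have hhγ2 : h t + γ ≤ 2 := by linarith [hbt.2]
    nlinarith
  have hdiff : K - (1+γ) * (1/t) - cc γ ξ σD A h t
      = (K * t * (1-t) - (1+γ)*(1-t) - ((2*γ+1)*t - (1+γ))
          - a2 ξ σD A h t * (h t + γ) * t) / (t * (1-t)) := by
    simp only [cc, a1]
    field_simp
    ring
  have hnum : 0 ≤ K * t * (1-t) - (1+γ)*(1-t) - ((2*γ+1)*t - (1+γ))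
      - a2 ξ σD A h t * (h t + γ) * t := by
    have hKt : K * (1 - y₀) ≤ K * (1 - t) := by nlinarith
    have hbra : 0 ≤ K * (1-t) - (2*γ+1) - a2 ξ σD A h t * (h t + γ) + (1+γ) := by
      nlinarith
    nlinarith [mul_nonneg ht0.le hbra]
  have := div_nonneg hnum (by positivity : (0:ℝ) ≤ t * (1-t))
  linarith [hdiff ▸ this]

end aux

/-- If `h ∈ C([0,1]) ∩ C¹([0,1))` with `0 ≤ h ≤ 1` solves the
path-dependent Riccati ODE with `h 0 = γ` and `h 1 = 1`, then `h ≥ γ` on `[0,1]`. -/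
theorem stmt15 (γ σD A ξ : ℝ) (hγ : γ ∈ Ioo (0:ℝ) 1) (hσ : 0 < σD)
    (hA : 1 < A) (hξ : 0 < ξ)
    (h h' : ℝ → ℝ)
    (hc : ContinuousOn h (Icc (0:ℝ) 1))
    (hc' : ContinuousOn h' (Ico (0:ℝ) 1))
    (hd : ∀ y ∈ Ico (0:ℝ) 1, HasDerivWithinAt h (h' y) (Ico (0:ℝ) 1) y)
    (hbd : ∀ y ∈ Icc (0:ℝ) 1, 0 ≤ h y ∧ h y ≤ 1)
    (h0 : h 0 = γ) (h1 : h 1 = 1)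
    (hode : ∀ y ∈ Ioo (0:ℝ) 1,
      h' y = a0 γ y + a1 γ y / (1 - y) * h y + a2 ξ σD A h y / (1 - y) * h y ^ 2) :
    ∀ y ∈ Icc (0:ℝ) 1, γ ≤ h y := by
  obtain ⟨hγ0, hγ1⟩ := hγ
  by_contra hcon
  push_neg at hcon
  obtain ⟨y₀, hy₀mem, hy₀lt⟩ := hcon
  have hy₀0 : 0 < y₀ := by
    rcases hy₀mem.1.lt_or_eq with hlt | heq
    · exact hlt
    · rw [← heq, h0] at hy₀lt; exact absurd hy₀lt (lt_irrefl γ)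
  have hy₀1 : y₀ < 1 := by
    rcases hy₀mem.2.lt_or_eq with hlt | heq
    · exact hlt
    · rw [heq, h1] at hy₀lt; exact absurd hy₀lt (not_lt.2 hγ1.le)
  have hy₀ : y₀ ∈ Ioo (0:ℝ) 1 := ⟨hy₀0, hy₀1⟩
  have ha2c : ∀ y ∈ Ioo (0:ℝ) 1, ContinuousAt (a2 ξ σD A h) y := fun y hy => a2_contAt hc hy
  have hccOn : ContinuousOn (cc γ ξ σD A h) (Ioo (0:ℝ) 1) :=
    fun y hy => (cc_contAt hc ha2c hy).continuousWithinAt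
  have hccint : ∀ x ∈ Ioo (0:ℝ) 1, ∀ y ∈ Ioo (0:ℝ) 1,
      IntervalIntegrable (cc γ ξ σD A h) volume x y := fun x hx y hy =>
    (hccOn.mono (Set.ordConnected_Ioo.uIcc_subset hx hy)).intervalIntegrable
  set C : ℝ → ℝ := fun y => ∫ t in y₀..y, cc γ ξ σD A h t with hC_def
  set w : ℝ → ℝ := fun y => (h y - γ) * Real.exp (-(C y)) with hw_def
  have hCd : ∀ y ∈ Ioo (0:ℝ) 1, HasDerivAt C (cc γ ξ σD A h y) y := fun y hy =>
    intervalIntegral.integral_hasDerivAt_right (hccint y₀ hy₀ y hy)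
      (hccOn.stronglyMeasurableAtFilter isOpen_Ioo y hy)
      (cc_contAt hc ha2c hy)
  have hhd : ∀ y ∈ Ioo (0:ℝ) 1, HasDerivAt h (h' y) y := fun y hy =>
    (hd y ⟨hy.1.le, hy.2⟩).hasDerivAt (Ico_mem_nhds hy.1 hy.2)
  have hwd : ∀ y ∈ Ioo (0:ℝ) 1, HasDerivAt w
      (γ ^ 2 * (1 + a2 ξ σD A h y) / (1 - y) * Real.exp (-(C y))) y := by
    intro y hy
    have hE : HasDerivAt (fun z => Real.exp (-(C z)))
        (Real.exp (-(C y)) * (-(cc γ ξ σD A h y))) y := ((hCd y hy).neg).exp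
    have hmul := ((hhd y hy).sub_const γ).mul hE
    refine hmul.congr_deriv ?_
    rw [← key_identity hy (hode y hy)]
    ring
  have hwy₀ : w y₀ = h y₀ - γ := by
    simp [hw_def, hC_def, intervalIntegral.integral_same]
  rcases le_or_gt 0 (1 + a2 ξ σD A h y₀) with hcase | hcase
  · -- Case A : the source term is nonnegative on `(0, y₀]`.
    set K : ℝ := ((2*γ+1) + 2*(ξ/σD^2 + A)) / (1 - y₀) with hK
    have hKpos : 0 < K := by
      have : (0:ℝ) < 1 - y₀ := by linarith
      positivity
    set δ : ℝ := γ - h y₀ with hδ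
    have hδpos : 0 < δ := by simp [hδ]; linarith
    set R : ℝ := (γ + 1) / δ with hR
    have hRpos : 0 < R := by positivity
    set M : ℝ := K * y₀ + |Real.log R| + 1 with hM
    have hMpos : 0 < M := by positivity
    set a : ℝ := y₀ * Real.exp (-M) with ha
    have ha0 : 0 < a := by positivity
    have haly : a < y₀ := by
      have h1 : Real.exp (-M) < 1 := Real.exp_lt_one_iff.2 (by linarith)
      nlinarith
    have hsub : Icc a y₀ ⊆ Ioo (0:ℝ) 1 := fun t ht =>
      ⟨lt_of_lt_of_le ha0 ht.1, lt_of_le_of_lt ht.2 hy₀1⟩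
    have hmono : MonotoneOn w (Icc a y₀) := by
      apply monotoneOn_of_deriv_nonneg (convex_Icc a y₀)
      · exact fun t ht => ((hwd t (hsub ht)).continuousAt).continuousWithinAt
      · intro t ht
        rw [interior_Icc] at ht
        exact ((hwd t (hsub (Ioo_subset_Icc_self ht))).differentiableAt).differentiableWithinAt
      · intro t ht
        rw [interior_Icc] at ht
        have htI : t ∈ Ioo (0:ℝ) 1 := hsub (Ioo_subset_Icc_self ht)
        rw [(hwd t htI).deriv]
        have ht2 : a2 ξ σD A h y₀ ≤ a2 ξ σD A h t :=
          a2_anti hσ hξ hc hbd ⟨htI.1.le, htI.2⟩ ⟨hy₀0.le, hy₀1⟩ ht.2.le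
        have hnn : 0 ≤ γ ^ 2 * (1 + a2 ξ σD A h t) :=
          mul_nonneg (sq_nonneg γ) (by linarith)
        exact mul_nonneg (div_nonneg hnn (by linarith [htI.2])) (Real.exp_pos _).le
    have hwa : w a ≤ w y₀ :=
      hmono ⟨le_rfl, haly.le⟩ ⟨haly.le, le_rfl⟩ haly.le
    -- Lower bound on `C a`.
    have haI : a ∈ Ioo (0:ℝ) 1 := hsub ⟨le_rfl, haly.le⟩
    have hccle : ∀ t ∈ Icc a y₀, cc γ ξ σD A h t ≤ K - (1+γ) * (1/t) := fun t ht =>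
      cc_upper hγ0 hγ1 hσ hA hξ hc hbd hy₀ (hsub ht) ht.2
    have hgint : IntervalIntegrable (fun t : ℝ => K - (1+γ) * (1/t)) volume a y₀ := by
      apply ContinuousOn.intervalIntegrable
      apply ContinuousOn.sub continuousOn_const
      apply ContinuousOn.mul continuousOn_const
      apply ContinuousOn.div continuousOn_const continuousOn_id
      intro t ht
      rw [uIcc_of_le haly.le] at ht
      exact (lt_of_lt_of_le ha0 ht.1).ne'
    have h1tint : IntervalIntegrable (fun t : ℝ => (1+γ) * (1/t)) volume a y₀ := by
      apply ContinuousOn.intervalIntegrable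
      apply ContinuousOn.mul continuousOn_const
      apply ContinuousOn.div continuousOn_const continuousOn_id
      intro t ht
      rw [uIcc_of_le haly.le] at ht
      exact (lt_of_lt_of_le ha0 ht.1).ne'
    have h0notin : (0:ℝ) ∉ uIcc a y₀ := by
      rw [uIcc_of_le haly.le]
      rintro ⟨hh1, hh2⟩
      linarith
    have hintle : (∫ t in a..y₀, cc γ ξ σD A h t)
        ≤ K * (y₀ - a) - (1+γ) * (Real.log y₀ - Real.log a) := by
      have hm := intervalIntegral.integral_mono_on haly.le (hccint a haI y₀ hy₀) hgint hccle
      have hgval : (∫ t in a..y₀, (K - (1+γ) * (1/t)))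
          = K * (y₀ - a) - (1+γ) * (Real.log y₀ - Real.log a) := by
        rw [intervalIntegral.integral_sub intervalIntegrable_const h1tint,
          intervalIntegral.integral_const, intervalIntegral.integral_const_mul,
          integral_one_div h0notin, Real.log_div hy₀0.ne' ha0.ne', smul_eq_mul]
        ring
      rw [hgval] at hm
      exact hm
    have hCa : (1+γ) * (Real.log y₀ - Real.log a) - K * (y₀ - a) ≤ C a := by
      have hsymm : C a = -∫ t in a..y₀, cc γ ξ σD A h t := by
        rw [hC_def]
        exact intervalIntegral.integral_symm a y₀
      rw [hsymm]
      linarith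
    have hloga : Real.log a = Real.log y₀ - M := by
      rw [ha, Real.log_mul hy₀0.ne' (Real.exp_pos _).ne', Real.log_exp]
      ring
    have hClog : Real.log R ≤ C a := by
      have h1 : (1+γ) * M - K * (y₀ - a) ≤ C a := by
        rw [hloga] at hCa
        calc (1+γ) * M - K * (y₀ - a)
            = (1+γ) * (Real.log y₀ - (Real.log y₀ - M)) - K * (y₀ - a) := by ring
          _ ≤ C a := hCa
      have h2 : K * (y₀ - a) ≤ K * y₀ := by nlinarith
      have h3 : M ≤ (1+γ) * M := by nlinarith
      calc Real.log R ≤ |Real.log R| := le_abs_self _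
        _ = M - K * y₀ - 1 := by rw [hM]; ring
        _ ≤ (1+γ) * M - K * (y₀ - a) - 1 := by linarith
        _ ≤ C a := by linarith
    have hexpCa : R ≤ Real.exp (C a) := by
      calc R = Real.exp (Real.log R) := (Real.exp_log hRpos).symm
        _ ≤ Real.exp (C a) := Real.exp_le_exp.2 hClog
    -- conclude contradiction
    have hCy₀ : C y₀ = 0 := by
      simp only [hC_def]
      exact intervalIntegral.integral_same
    have hwa' : (h a - γ) * Real.exp (-(C a)) ≤ -δ := by
      rw [hwy₀] at hwa
      simp only [hw_def] at hwa
      linarith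
    have hexp1 : Real.exp (-(C a)) * Real.exp (C a) = 1 := by
      rw [← Real.exp_add]
      simp
    have hha : h a - γ ≤ -δ * Real.exp (C a) := by
      have h3 := mul_le_mul_of_nonneg_right hwa' (Real.exp_pos (C a)).le
      calc h a - γ = (h a - γ) * (Real.exp (-(C a)) * Real.exp (C a)) := by
            rw [hexp1, mul_one]
        _ = (h a - γ) * Real.exp (-(C a)) * Real.exp (C a) := by ring
        _ ≤ -δ * Real.exp (C a) := h3
    have hfin : h a ≤ -1 := by
      have h4 : δ * R ≤ δ * Real.exp (C a) := mul_le_mul_of_nonneg_left hexpCa hδpos.le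
      have hδR : δ * R = γ + 1 := by
        rw [hR, mul_div_cancel₀ _ hδpos.ne']
      linarith
    linarith [(hbd a ⟨ha0.le, (lt_trans haly hy₀1).le⟩).1]
  · -- Case B : the source term is negative on `[y₀, 1)`.
    have hneg : ∀ b ∈ Ico y₀ 1, h b < γ := by
      intro b hb
      rcases hb.1.lt_or_eq with hlt | heq
      swap
      · rw [← heq]; exact hy₀lt
      have hbI : b ∈ Ioo (0:ℝ) 1 := ⟨lt_trans hy₀0 hlt, hb.2⟩
      have hsub : Icc y₀ b ⊆ Ioo (0:ℝ) 1 := fun t ht =>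
        ⟨lt_of_lt_of_le hy₀0 ht.1, lt_of_le_of_lt ht.2 hb.2⟩
      have hanti : AntitoneOn w (Icc y₀ b) := by
        apply antitoneOn_of_deriv_nonpos (convex_Icc y₀ b)
        · exact fun t ht => ((hwd t (hsub ht)).continuousAt).continuousWithinAt
        · intro t ht
          rw [interior_Icc] at ht
          exact ((hwd t (hsub (Ioo_subset_Icc_self ht))).differentiableAt).differentiableWithinAt
        · intro t ht
          rw [interior_Icc] at ht
          have htI : t ∈ Ioo (0:ℝ) 1 := hsub (Ioo_subset_Icc_self ht)
          rw [(hwd t htI).deriv]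
          have ht2 : a2 ξ σD A h t ≤ a2 ξ σD A h y₀ :=
            a2_anti hσ hξ hc hbd ⟨hy₀0.le, hy₀1⟩ ⟨htI.1.le, htI.2⟩ ht.1.le
          have hnp : γ ^ 2 * (1 + a2 ξ σD A h t) ≤ 0 := by nlinarith [sq_nonneg γ]
          exact mul_nonpos_iff.2 (Or.inr
            ⟨div_nonpos_iff.2 (Or.inr ⟨hnp, by linarith [htI.2]⟩), (Real.exp_pos _).le⟩)
      have hwb := hanti ⟨le_rfl, hlt.le⟩ ⟨hlt.le, le_rfl⟩ hlt.le
      have hCy₀ : C y₀ = 0 := by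
        simp only [hC_def]
        exact intervalIntegral.integral_same
      rw [hwy₀] at hwb
      simp only [hw_def] at hwb
      by_contra hge
      push_neg at hge
      have : 0 ≤ (h b - γ) * Real.exp (-(C b)) := mul_nonneg (by linarith) (Real.exp_pos _).le
      linarith
    have hten : Filter.Tendsto h (nhdsWithin 1 (Ioo y₀ 1)) (nhds (h 1)) := by
      have hcw : ContinuousWithinAt h (Icc (0:ℝ) 1) 1 := hc 1 ⟨zero_le_one, le_rfl⟩
      exact (hcw.mono (fun t ht => ⟨(lt_trans hy₀0 ht.1).le, ht.2.le⟩))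
    haveI : (nhdsWithin (1:ℝ) (Ioo y₀ 1)).NeBot := right_nhdsWithin_Ioo_neBot hy₀1
    have hle : h 1 ≤ γ := le_of_tendsto hten
      (eventually_nhdsWithin_of_forall fun y hy => (hneg y ⟨hy.1.le, hy.2⟩).le)
    rw [h1] at hle
    exact absurd hle (not_le.2 hγ1)
end

section
/- Let γ ∈ (0,1). Suppose f ∈ C([0,1]) ∩ C¹([0,1)) satisfies 0 ≤ f(y) ≤ 1 for all y ∈ [0,1], f(0) = γ, f(1) = 1, and f'(y) = ((1+γ)/y)·(γ − f(y)) + γ·f(y)·(1−f(y))/(1−y) for all y ∈ (0,1). Then: (i) lim_{y↑1} f'(y) = ∞, and in particular f does not extend to a function in C¹([0,1]); (ii) ∫₀¹ |f'(q)| dq < ∞; (iii) ∫₀¹ (1−f(q))/(1−q) dq < ∞; and (iv) lim inf_{y↑1} (1−f(y))/(1−y) = ∞. -/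
set_option maxHeartbeats 1000000


open Set Real Filter Topology

/-- Let `γ ∈ (0,1)` and let `f ∈ C([0,1]) ∩ C¹([0,1))` with
`0 ≤ f ≤ 1`, `f 0 = γ`, `f 1 = 1`, solve
`f'(y) = (1+γ)/y·(γ − f(y)) + γ·f(y)(1−f(y))/(1−y)` on `(0,1)`. Then
(i) `f'(y) → ∞` as `y ↑ 1` (in particular `f'` does not extend continuously to `[0,1]`);
(ii) `∫₀¹ |f'| < ∞`; (iii) `∫₀¹ (1−f(q))/(1−q) dq < ∞`; and
(iv) `(1−f(y))/(1−y) → ∞` as `y ↑ 1`. -/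
theorem stmt18 (γ : ℝ) (hγ : γ ∈ Ioo (0:ℝ) 1)
    (f f' : ℝ → ℝ)
    (hc : ContinuousOn f (Icc (0:ℝ) 1))
    (hc' : ContinuousOn f' (Ico (0:ℝ) 1))
    (hd : ∀ y ∈ Ico (0:ℝ) 1, HasDerivWithinAt f (f' y) (Ico (0:ℝ) 1) y)
    (hbd : ∀ y ∈ Icc (0:ℝ) 1, 0 ≤ f y ∧ f y ≤ 1)
    (hf0 : f 0 = γ) (hf1 : f 1 = 1)
    (hode : ∀ y ∈ Ioo (0:ℝ) 1,
      f' y = (1 + γ) / y * (γ - f y) + γ * f y * (1 - f y) / (1 - y)) :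
    Tendsto f' (𝓝[<] (1:ℝ)) atTop ∧
    ¬ (∃ F : ℝ → ℝ, ContinuousOn F (Icc (0:ℝ) 1) ∧ ∀ y ∈ Ico (0:ℝ) 1, F y = f' y) ∧
    IntervalIntegrable f' MeasureTheory.volume 0 1 ∧
    IntervalIntegrable (fun q => (1 - f q) / (1 - q)) MeasureTheory.volume 0 1 ∧
    Tendsto (fun y => (1 - f y) / (1 - y)) (𝓝[<] (1:ℝ)) atTop := by
  obtain ⟨hγ0, hγ1⟩ := hγ
  -- choose y₁ < 1 with f ≥ (1+γ)/2 on [y₁, 1]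
  have hev : ∀ᶠ y in 𝓝[Icc (0:ℝ) 1] 1, (1+γ)/2 < f y := by
    have h1 : Ioi ((1+γ)/2) ∈ 𝓝 (f 1) := by
      rw [hf1]; exact Ioi_mem_nhds (by linarith)
    exact hc 1 (by norm_num) h1
  obtain ⟨ε, hε, hball⟩ := Metric.mem_nhdsWithin_iff.1 hev
  set y₁ : ℝ := max (1/2) (1 - ε/2) with hy₁def
  have hy₁0 : (0:ℝ) < y₁ := lt_of_lt_of_le (by norm_num) (le_max_left _ _)
  have hy₁1 : y₁ < 1 := max_lt (by norm_num) (by linarith)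
  have hfy : ∀ y ∈ Icc y₁ 1, (1+γ)/2 ≤ f y := by
    intro y hy
    have h1 : y ∈ Icc (0:ℝ) 1 := ⟨le_trans hy₁0.le hy.1, hy.2⟩
    have h2 : y ∈ Metric.ball (1:ℝ) ε := by
      rw [Metric.mem_ball, Real.dist_eq, abs_lt]
      have := le_trans (le_max_right (1/2:ℝ) (1 - ε/2)) hy.1
      constructor <;> [linarith; linarith [hy.2]]
    exact (hball ⟨h2, h1⟩).le
  set g : ℝ → ℝ := fun y => (1 - f y) / (1 - y) with hgdef
  set δ : ℝ := (1+γ)*(1-γ)/2 with hδdef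
  set C : ℝ := (1+γ)/y₁ with hCdef
  have hδ0 : 0 < δ := by rw [hδdef]; nlinarith
  have hC0 : 0 < C := by rw [hCdef]; positivity
  -- derivative at interior points
  have hder : ∀ y ∈ Ioo (0:ℝ) 1, HasDerivAt f (f' y) y := fun y hy =>
    (hd y ⟨hy.1.le, hy.2⟩).hasDerivAt (Ico_mem_nhds hy.1 hy.2)
  have hgnn : ∀ y ∈ Ioo y₁ 1, 0 ≤ g y := by
    intro y hy
    have := (hbd y ⟨(hy₁0.trans hy.1).le, hy.2.le⟩).2
    exact div_nonneg (by linarith) (by linarith [hy.2])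
  -- the key bounds
  have key : ∀ y ∈ Ioo y₁ 1, (γ/2) * g y - C ≤ f' y ∧ f' y ≤ γ * g y - δ := by
    intro y hy
    have hyl : y₁ ≤ y := hy.1.le
    have hy0 : 0 < y := hy₁0.trans hy.1
    have hy1 : y < 1 := hy.2
    have h1y : 0 < 1 - y := by linarith
    have hfyl : (1+γ)/2 ≤ f y := hfy y ⟨hyl, hy1.le⟩
    have hfyu : f y ≤ 1 := (hbd y ⟨hy0.le, hy1.le⟩).2
    have hgnn' : 0 ≤ g y := hgnn y hy
    have hodey := hode y ⟨hy0, hy1⟩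
    have hrw : γ * f y * (1 - f y) / (1 - y) = γ * f y * g y := by
      rw [hgdef]; simp [mul_div_assoc]
    rw [hrw] at hodey
    have hyinv : (1+γ) ≤ (1+γ)/y := by
      rw [le_div_iff₀ hy0]; nlinarith
    have hyinv2 : (1+γ)/y ≤ (1+γ)/y₁ := by gcongr <;> linarith
    have hApos : 0 < (1+γ)/y := by positivity
    have hAub : (1+γ)/y * (γ - f y) ≤ -δ := by
      have h2 : (1+γ)/y * (γ - f y) ≤ (1+γ) * (γ - f y) :=
        mul_le_mul_of_nonpos_right hyinv (by linarith)
      rw [hδdef]; nlinarith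
    have hAlb : -C ≤ (1+γ)/y * (γ - f y) := by
      have h2 : ((1+γ)/y) * (-1) ≤ (1+γ)/y * (γ - f y) :=
        mul_le_mul_of_nonneg_left (by linarith) hApos.le
      rw [hCdef]; nlinarith
    constructor
    · rw [hodey]
      nlinarith [mul_nonneg (mul_nonneg hγ0.le hgnn') (by linarith : (0:ℝ) ≤ f y - 1/2)]
    · rw [hodey]
      nlinarith [mul_nonneg (mul_nonneg hγ0.le hgnn') (by linarith : (0:ℝ) ≤ 1 - f y)]
  -- derivative of g
  have hgd : ∀ y ∈ Ioo y₁ 1, HasDerivAt g ((g y - f' y)/(1-y)) y := by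
    intro y hy
    have hy1 : (0:ℝ) < 1 - y := by linarith [hy.2]
    have hfd : HasDerivAt f (f' y) y := hder y ⟨hy₁0.trans hy.1, hy.2⟩
    have h1 : HasDerivAt (fun x => 1 - f x) (-(f' y)) y := hfd.const_sub 1
    have h2 : HasDerivAt (fun x : ℝ => 1 - x) (-1) y := by
      simpa using (hasDerivAt_id y).const_sub 1
    have h3 : HasDerivAt g ((-(f' y) * (1 - y) - (1 - f y) * -1) / (1 - y) ^ 2) y := h1.div h2 hy1.ne'
    convert h3 using 1
    rw [hgdef]
    field_simp
    ring
  -- monotonicity of φ = g + δ log (1 - ·)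
  set φ : ℝ → ℝ := fun y => g y + δ * Real.log (1 - y) with hφdef
  have hφd : ∀ y ∈ Ioo y₁ 1, HasDerivAt φ ((g y - f' y)/(1-y) + δ * (-1/(1-y))) y := by
    intro y hy
    have hy1 : (0:ℝ) < 1 - y := by linarith [hy.2]
    have h2 : HasDerivAt (fun x : ℝ => 1 - x) (-1) y := by
      simpa using (hasDerivAt_id y).const_sub 1
    have h3 : HasDerivAt (fun x => Real.log (1 - x)) (-1/(1-y)) y := h2.log hy1.ne'
    exact (hgd y hy).add (h3.const_mul δ)
  have hgc : ContinuousOn g (Ico y₁ 1) := by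
    apply ContinuousOn.div
    · exact continuousOn_const.sub (hc.mono (fun x hx => ⟨le_trans hy₁0.le hx.1, hx.2.le⟩))
    · exact continuousOn_const.sub continuousOn_id
    · exact fun x hx => sub_ne_zero.2 (ne_of_lt hx.2).symm
  have hφmono : MonotoneOn φ (Ico y₁ 1) := by
    apply monotoneOn_of_deriv_nonneg (convex_Ico y₁ 1)
    · apply hgc.add (ContinuousOn.mul continuousOn_const ?_)
      apply ContinuousOn.log (continuousOn_const.sub continuousOn_id)
      exact fun x hx => sub_ne_zero.2 (ne_of_lt hx.2).symm
    · rw [interior_Ico]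
      exact fun x hx => ((hφd x hx).differentiableAt).differentiableWithinAt
    · rw [interior_Ico]
      intro x hx
      rw [(hφd x hx).deriv]
      have hx1 : (0:ℝ) < 1 - x := by linarith [hx.2]
      have hk := (key x hx).2
      have hgnn' : 0 ≤ g x := hgnn x hx
      have heq : (g x - f' x)/(1-x) + δ * (-1/(1-x)) = (g x - f' x - δ)/(1-x) := by
        field_simp
        ring
      rw [heq]
      apply div_nonneg _ hx1.le
      nlinarith
  -- lower bound for g and part (iv)
  have hglb : ∀ y ∈ Ico y₁ 1,
      (g y₁ + δ * Real.log (1 - y₁)) - δ * Real.log (1 - y) ≤ g y := by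
    intro y hy
    have h1 : g y₁ + δ * Real.log (1 - y₁) ≤ g y + δ * Real.log (1 - y) :=
      hφmono (left_mem_Ico.2 hy₁1) hy hy.1
    linarith
  have hlog : Tendsto (fun y => Real.log (1 - y)) (𝓝[<] (1:ℝ)) atBot := by
    apply Real.tendsto_log_nhdsGT_zero.comp
    apply tendsto_nhdsWithin_of_tendsto_nhds_of_eventually_within
    · have h1 : Tendsto (fun y : ℝ => 1 - y) (𝓝 1) (𝓝 0) := by
        have h0 : Continuous (fun y : ℝ => 1 - y) := continuous_const.sub continuous_id
        have := h0.tendsto (1:ℝ)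
        simpa using this
      exact h1.mono_left nhdsWithin_le_nhds
    · filter_upwards [self_mem_nhdsWithin] with x hx
      simp only [mem_Iio] at hx
      exact sub_pos.2 hx
  have hlb_tendsto : Tendsto (fun y => (g y₁ + δ * Real.log (1 - y₁)) - δ * Real.log (1 - y)) (𝓝[<] (1:ℝ)) atTop := by
    have h1 : Tendsto (fun y => δ * Real.log (1 - y)) (𝓝[<] (1:ℝ)) atBot :=
      hlog.const_mul_atBot hδ0
    have h2 : Tendsto (fun y => -(δ * Real.log (1 - y))) (𝓝[<] (1:ℝ)) atTop :=
      tendsto_neg_atBot_atTop.comp h1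
    have h3 := tendsto_atTop_add_const_left _ (g y₁ + δ * Real.log (1 - y₁)) h2
    simpa [sub_eq_add_neg] using h3
  have hiv : Tendsto g (𝓝[<] (1:ℝ)) atTop := by
    apply tendsto_atTop_mono' _ _ hlb_tendsto
    filter_upwards [Ico_mem_nhdsLT_of_mem (⟨hy₁1, le_refl 1⟩ : (1:ℝ) ∈ Ioc y₁ 1)] with y hy
    exact hglb y hy
  -- part (i)
  have hi : Tendsto f' (𝓝[<] (1:ℝ)) atTop := by
    have h1 : Tendsto (fun y => (γ/2) * g y - C) (𝓝[<] (1:ℝ)) atTop := by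
      have h2 := hiv.const_mul_atTop (by positivity : (0:ℝ) < γ/2)
      have h3 := tendsto_atTop_add_const_right _ (-C) h2
      simpa [sub_eq_add_neg] using h3
    apply tendsto_atTop_mono' _ _ h1
    filter_upwards [Ioo_mem_nhdsLT_of_mem (⟨hy₁1, le_refl 1⟩ : (1:ℝ) ∈ Ioc y₁ 1)] with y hy
    exact (key y hy).1
  -- part (extension impossible)
  have hne : ¬ (∃ F : ℝ → ℝ, ContinuousOn F (Icc (0:ℝ) 1) ∧ ∀ y ∈ Ico (0:ℝ) 1, F y = f' y) := by
    rintro ⟨F, hF, hFe⟩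
    have h1 : Tendsto F (𝓝[<] (1:ℝ)) (𝓝 (F 1)) := by
      have h2 : Tendsto F (𝓝[Icc (0:ℝ) 1] 1) (𝓝 (F 1)) := hF 1 (by norm_num)
      rw [← nhdsWithin_Ioo_eq_nhdsLT (show (0:ℝ) < 1 by norm_num)]
      exact h2.mono_left (nhdsWithin_mono _ Ioo_subset_Icc_self)
    have h3 : Tendsto f' (𝓝[<] (1:ℝ)) (𝓝 (F 1)) := by
      apply h1.congr'
      filter_upwards [Ioo_mem_nhdsLT_of_mem (⟨(by norm_num : (0:ℝ) < 1), le_refl 1⟩ :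
        (1:ℝ) ∈ Ioc 0 1)] with y hy
      exact hFe y ⟨hy.1.le, hy.2⟩
    exact not_tendsto_nhds_of_tendsto_atTop hi (F 1) h3
  -- integrability of f' + C near 1
  have hintp : MeasureTheory.IntegrableOn (fun y => f' y + C) (Ioc y₁ 1)
      MeasureTheory.volume := by
    apply intervalIntegral.integrableOn_deriv_of_nonneg (g := fun y => f y + C * y)
    · exact (hc.mono (Icc_subset_Icc hy₁0.le le_rfl)).add (continuousOn_const.mul continuousOn_id)
    · intro x hx
      have hx01 : x ∈ Ioo (0:ℝ) 1 := ⟨hy₁0.trans hx.1, hx.2⟩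
      have h1 : HasDerivAt (fun y : ℝ => C * y) C x := by
        simpa using (hasDerivAt_id x).const_mul C
      exact (hder x hx01).add h1
    · intro x hx
      have h1 := (key x hx).1
      have h2 := hgnn x hx
      nlinarith
  have hintf' : MeasureTheory.IntegrableOn f' (Ioc y₁ 1) MeasureTheory.volume := by
    have hconst : MeasureTheory.IntegrableOn (fun _ : ℝ => C) (Ioc y₁ 1)
        MeasureTheory.volume :=
      MeasureTheory.integrableOn_const measure_Ioc_lt_top.ne
    have h2 := hintp.sub hconst
    simpa [Pi.sub_def] using h2
  have hii : IntervalIntegrable f' MeasureTheory.volume 0 1 := by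
    apply IntervalIntegrable.trans (b := y₁)
    · apply ContinuousOn.intervalIntegrable
      apply hc'.mono
      rw [uIcc_of_le hy₁0.le]
      exact fun x hx => ⟨hx.1, lt_of_le_of_lt hx.2 hy₁1⟩
    · rw [intervalIntegrable_iff_integrableOn_Ioc_of_le hy₁1.le]
      exact hintf'
  -- integrability of g
  have hgint : MeasureTheory.IntegrableOn g (Ioo y₁ 1) MeasureTheory.volume := by
    have hb : MeasureTheory.IntegrableOn (fun y => (2/γ) * (f' y + C)) (Ioo y₁ 1)
        MeasureTheory.volume :=
      (hintp.mono_set Ioo_subset_Ioc_self).const_mul _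
    apply MeasureTheory.Integrable.mono' hb
      ((hgc.mono Ioo_subset_Ico_self).aestronglyMeasurable measurableSet_Ioo)
    filter_upwards [MeasureTheory.ae_restrict_mem measurableSet_Ioo] with y hy
    have hgnn' : 0 ≤ g y := hgnn y hy
    rw [Real.norm_eq_abs, abs_of_nonneg hgnn']
    have h1 := (key y hy).1
    rw [show (2/γ) * (f' y + C) = (2*(f' y + C))/γ by ring, le_div_iff₀ hγ0]
    nlinarith
  have hgii : IntervalIntegrable g MeasureTheory.volume 0 1 := by
    apply IntervalIntegrable.trans (b := y₁)
    · apply ContinuousOn.intervalIntegrable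
      rw [uIcc_of_le hy₁0.le]
      apply ContinuousOn.div
      · exact continuousOn_const.sub (hc.mono (Icc_subset_Icc le_rfl hy₁1.le))
      · exact continuousOn_const.sub continuousOn_id
      · exact fun x hx => sub_ne_zero.2 (ne_of_lt (lt_of_le_of_lt hx.2 hy₁1)).symm
    · rw [intervalIntegrable_iff_integrableOn_Ioc_of_le hy₁1.le,
        integrableOn_Ioc_iff_integrableOn_Ioo]
      exact hgint
  exact ⟨hi, hne, hii, hgii, hiv⟩
end

section
/- Let γ ∈ (0,1) and A > 1. Let f ∈ C([0,1]) ∩ C¹([0,1)) satisfy 0 ≤ f ≤ 1, f(0) = γ, f(1) = 1, and f'(y) = ((1+γ)/y)·(γ − f(y)) + γ·f(y)·(1−f(y))/(1−y) for all y ∈ (0,1). Let h ∈ C¹([0,1]) with γ ≤ h ≤ 1 satisfy h(0) = γ, h(1) = 1, and h'(y) = ((1+γ)/y)·(γ − h(y)) + h(y)·(γ + ((A−γ)·exp(∫_y^1 (1−h(q))/(1−q) dq) − A)·h(y))/(1−y) for all y ∈ (0,1). Then the comparison principle fails at y = 1: although h'(y) ≥ ((1+γ)/y)·(γ − h(y))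 + γ·h(y)·(1−h(y))/(1−y) for all y ∈ (0,1) and f(1) = h(1) = 1, there exists y₁ ∈ (0,1) such that f(y) < h(y) for all y ∈ (y₁,1); in particular it is not true that h ≤ f on any left neighborhood of 1. -/
open Set Real

set_option maxHeartbeats 1000000 in
/-- **Failure of the comparison principle at `y = 1`.**
Let `f` solve `f' = (1+γ)/y·(γ−f) + γ·f(1−f)/(1−y)` with `f 0 = γ`, `f 1 = 1`,
`0 ≤ f ≤ 1`, and let `h ∈ C¹([0,1])` with `γ ≤ h ≤ 1` solve the singular
path-dependent Riccati ODE with `h 0 = γ`, `h 1 = 1`. Then `h` is a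
supersolution of `f`'s ODE, yet `f < h` on a left neighborhood of `1`; in
particular `h ≤ f` fails near `1`. -/
theorem stmt19 (γ A : ℝ) (hγ : γ ∈ Ioo (0:ℝ) 1) (hA : 1 < A)
    (f f' : ℝ → ℝ)
    (hfc : ContinuousOn f (Icc (0:ℝ) 1))
    (hfc' : ContinuousOn f' (Ico (0:ℝ) 1))
    (hfd : ∀ y ∈ Ico (0:ℝ) 1, HasDerivWithinAt f (f' y) (Ico (0:ℝ) 1) y)
    (hfbd : ∀ y ∈ Icc (0:ℝ) 1, 0 ≤ f y ∧ f y ≤ 1)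
    (hf0 : f 0 = γ) (hf1 : f 1 = 1)
    (hfode : ∀ y ∈ Ioo (0:ℝ) 1,
      f' y = (1 + γ) / y * (γ - f y) + γ * f y * (1 - f y) / (1 - y))
    (h h' : ℝ → ℝ)
    (hhc' : ContinuousOn h' (Icc (0:ℝ) 1))
    (hhd : ∀ y ∈ Icc (0:ℝ) 1, HasDerivWithinAt h (h' y) (Icc (0:ℝ) 1) y)
    (hhbd : ∀ y ∈ Icc (0:ℝ) 1, γ ≤ h y ∧ h y ≤ 1)
    (hh0 : h 0 = γ) (hh1 : h 1 = 1)
    (hhode : ∀ y ∈ Ioo (0:ℝ) 1, h' y =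
      (1 + γ) / y * (γ - h y) +
        h y * (γ + ((A - γ) * Real.exp (∫ q in y..(1:ℝ), (1 - h q) / (1 - q)) - A) * h y)
          / (1 - y)) :
    (∀ y ∈ Ioo (0:ℝ) 1,
      (1 + γ) / y * (γ - h y) + γ * h y * (1 - h y) / (1 - y) ≤ h' y) ∧
    (∃ y1 ∈ Ioo (0:ℝ) 1, ∀ y ∈ Ioo y1 1, f y < h y) := by
  obtain ⟨hγ0, hγ1⟩ := hγ
  constructor
  · -- supersolution inequality
    intro y hy
    obtain ⟨hy0, hy1⟩ := hy
    have hs : (0:ℝ) < 1 - y := by linarith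
    have hI : 0 ≤ ∫ q in y..(1:ℝ), (1 - h q) / (1 - q) := by
      apply intervalIntegral.integral_nonneg (le_of_lt hy1)
      intro u hu
      have hu01 : u ∈ Icc (0:ℝ) 1 := ⟨le_trans hy0.le hu.1, hu.2⟩
      have h1 : (0:ℝ) ≤ 1 - h u := by linarith [(hhbd u hu01).2]
      exact div_nonneg h1 (by linarith [hu.2])
    have hexp : 1 ≤ Real.exp (∫ q in y..(1:ℝ), (1 - h q) / (1 - q)) :=
      Real.one_le_exp hI
    have hhy := hhbd y ⟨hy0.le, hy1.le⟩
    rw [hhode y ⟨hy0, hy1⟩]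
    have key : γ * h y * (1 - h y) ≤
        h y * (γ + ((A - γ) * Real.exp (∫ q in y..(1:ℝ), (1 - h q) / (1 - q)) - A) * h y) := by
      have h1 : 0 ≤ (h y)^2 * ((A - γ) *
          (Real.exp (∫ q in y..(1:ℝ), (1 - h q) / (1 - q)) - 1)) :=
        mul_nonneg (sq_nonneg _) (mul_nonneg (by linarith) (by linarith))
      nlinarith [h1]
    gcongr
  · -- f < h near 1
    set c : ℝ := (1 + γ) * (1 - γ) / 2 with hc
    have hcpos : 0 < c := by rw [hc]; nlinarith
    -- bound on (1 - h)/(1 - y)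
    obtain ⟨M, hM⟩ := (isCompact_Icc).exists_bound_of_continuousOn hhc'
    have hM0 : 0 ≤ M := le_trans (norm_nonneg _) (hM 0 ⟨le_refl 0, by norm_num⟩)
    have hlip : ∀ y ∈ Icc (0:ℝ) 1, 1 - h y ≤ M * (1 - y) := by
      intro y hy
      have hb := Convex.norm_image_sub_le_of_norm_hasDerivWithin_le hhd hM
        (convex_Icc 0 1) hy (right_mem_Icc.2 (by norm_num)) (x := y) (y := (1:ℝ))
      rw [hh1] at hb
      have h1 : 1 - h y ≤ ‖1 - h y‖ := le_abs_self _
      have h2 : ‖(1:ℝ) - y‖ = 1 - y := abs_of_nonneg (by linarith [hy.2])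
      rw [h2] at hb
      linarith
    -- choose y0 with f > (1+γ)/2 on (y0, 1)
    have hct : ContinuousWithinAt f (Icc (0:ℝ) 1) 1 :=
      hfc.continuousWithinAt ⟨by norm_num, le_refl 1⟩
    have hev : ∀ᶠ y in nhdsWithin 1 (Icc (0:ℝ) 1), (1 + γ) / 2 < f y := by
      have hmem : Ioi ((1 + γ) / 2) ∈ nhds (f 1) := by
        rw [hf1]; exact Ioi_mem_nhds (by linarith)
      exact hct hmem
    obtain ⟨δ, hδ0, hδ⟩ := Metric.mem_nhdsWithin_iff.1 hev
    set y0 : ℝ := max (1/2) (1 - δ/2) with hy0def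
    have hy0half : (1/2 : ℝ) ≤ y0 := le_max_left _ _
    have hy0lt1 : y0 < 1 := by
      apply max_lt (by norm_num)
      linarith
    have hfbig : ∀ x ∈ Ioo y0 1, (1 + γ) / 2 < f x := by
      intro x hx
      apply hδ
      constructor
      · rw [Metric.mem_ball, Real.dist_eq]
        rw [abs_of_nonpos (by linarith [hx.2])]
        have : 1 - δ/2 ≤ y0 := le_max_right _ _
        linarith [hx.1]
      · exact ⟨by linarith [hx.1], hx.2.le⟩
    -- the auxiliary function w
    set w : ℝ → ℝ := fun y => (1 - f y) / (1 - y) + c * Real.log (1 - y) with hwdef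
    have hsub : Ico y0 1 ⊆ Icc (0:ℝ) 1 := fun x hx => ⟨by linarith [hx.1], hx.2.le⟩
    have hwc : ContinuousOn w (Ico y0 1) := by
      apply ContinuousOn.add
      · apply ContinuousOn.div
        · exact (continuousOn_const.sub (hfc.mono hsub))
        · exact continuousOn_const.sub continuousOn_id
        · intro x hx
          have hx2 := hx.2
          intro hcon
          have hcon2 : (1:ℝ) - x = 0 := by simpa using hcon
          linarith
      · apply ContinuousOn.mul continuousOn_const
        apply ContinuousOn.log (continuousOn_const.sub continuousOn_id)
        intro x hx
        have hx2 := hx.2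
        intro hcon
        have hcon2 : (1:ℝ) - x = 0 := by simpa using hcon
        linarith
    have hderiv : ∀ x ∈ Ioo y0 1, HasDerivAt w
        (((0 - f' x) * (1 - x) - (1 - f x) * (0 - 1)) / (1 - x) ^ 2 +
          c * ((0 - 1) / (1 - x))) x := by
      intro x hx
      have hx01 : x ∈ Ioo (0:ℝ) 1 := ⟨by linarith [hx.1], hx.2⟩
      have hne : (1:ℝ) - x ≠ 0 := by intro hcon; linarith [hx.2]
      have hfD : HasDerivAt f (f' x) x :=
        (hfd x ⟨hx01.1.le, hx01.2⟩).hasDerivAt (Ico_mem_nhds hx01.1 hx01.2)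
      have h1 : HasDerivAt (fun y : ℝ => 1 - f y) (0 - f' x) x :=
        (hasDerivAt_const x (1:ℝ)).sub hfD
      have h2 : HasDerivAt (fun y : ℝ => 1 - y) (0 - 1) x :=
        (hasDerivAt_const x (1:ℝ)).sub (hasDerivAt_id x)
      have h3 := h1.div h2 hne
      have h4 : HasDerivAt (fun y : ℝ => Real.log (1 - y)) ((0 - 1) / (1 - x)) x :=
        h2.log hne
      exact h3.add (h4.const_mul c)
    have hderiv_nonneg : ∀ x ∈ Ioo y0 1,
        0 ≤ ((0 - f' x) * (1 - x) - (1 - f x) * (0 - 1)) / (1 - x) ^ 2 +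
          c * ((0 - 1) / (1 - x)) := by
      intro x hx
      have hx01 : x ∈ Ioo (0:ℝ) 1 := ⟨by linarith [hx.1], hx.2⟩
      have hs : (0:ℝ) < 1 - x := by linarith [hx.2]
      have hxpos : (0:ℝ) < x := hx01.1
      have hfx := hfode x hx01
      have hfb := hfbd x ⟨hx01.1.le, hx01.2.le⟩
      have hfbig' := hfbig x hx
      have hT : c ≤ (1 + γ) / x * (f x - γ) := by
        have h1 : (1 + γ) ≤ (1 + γ) / x := by
          rw [le_div_iff₀ hxpos]; nlinarith [hx01.2]
        have h2 : (1 - γ) / 2 ≤ f x - γ := by linarith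
        have h3 : (0:ℝ) ≤ f x - γ := by linarith
        calc c = (1 + γ) * ((1 - γ) / 2) := by ring
        _ ≤ (1 + γ) * (f x - γ) := by nlinarith
        _ ≤ (1 + γ) / x * (f x - γ) := mul_le_mul_of_nonneg_right h1 h3
      have hprod : 0 ≤ (1 - f x) * (1 - γ * f x) := by
        apply mul_nonneg (by linarith [hfb.2])
        nlinarith [hfb.1, hfb.2]
      have key : c * (1 - x) ≤ (0 - f' x) * (1 - x) - (1 - f x) * (0 - 1) := by
        have e2 : (0 - f' x) * (1 - x) - (1 - f x) * (0 - 1) =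
            (1 + γ) / x * (f x - γ) * (1 - x) + (1 - f x) * (1 - γ * f x) := by
          rw [hfx]; field_simp; ring
        have hTs := mul_le_mul_of_nonneg_right hT hs.le
        rw [e2]; linarith [hTs, hprod]
      have h5 : c / (1 - x) ≤ ((0 - f' x) * (1 - x) - (1 - f x) * (0 - 1)) / (1 - x) ^ 2 := by
        rw [div_le_div_iff₀ hs (by positivity)]
        have := mul_le_mul_of_nonneg_right key hs.le
        nlinarith [this]
      have h6 : c * ((0 - 1) / (1 - x)) = -(c / (1 - x)) := by ring
      linarith [h5, h6.ge, h6.le]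
    have hmono : MonotoneOn w (Ico y0 1) := by
      apply monotoneOn_of_deriv_nonneg (convex_Ico _ _) hwc
      · intro x hx
        rw [interior_Ico] at hx
        exact ((hderiv x hx).differentiableAt).differentiableWithinAt
      · intro x hx
        rw [interior_Ico] at hx
        rw [(hderiv x hx).deriv]
        exact hderiv_nonneg x hx
    -- choose y1
    set y1 : ℝ := max y0 (1 - Real.exp ((w y0 - M - 1) / c)) with hy1def
    have hy1lt1 : y1 < 1 := by
      apply max_lt hy0lt1
      have := Real.exp_pos ((w y0 - M - 1) / c)
      linarith
    have hy1pos : 0 < y1 := lt_of_lt_of_le (by linarith) (le_max_left _ _)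
    refine ⟨y1, ⟨hy1pos, hy1lt1⟩, ?_⟩
    intro y hy
    obtain ⟨hyy1, hylt1⟩ := hy
    have hyy0 : y0 ≤ y := le_trans (le_max_left _ _) hyy1.le
    have hs : (0:ℝ) < 1 - y := by linarith
    have hwmono : w y0 ≤ w y :=
      hmono ⟨le_refl y0, hy0lt1⟩ ⟨hyy0, hylt1⟩ hyy0
    have hlog : Real.log (1 - y) < (w y0 - M - 1) / c := by
      rw [Real.log_lt_iff_lt_exp hs]
      have : 1 - Real.exp ((w y0 - M - 1) / c) ≤ y1 := le_max_right _ _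
      linarith
    have hclog : c * Real.log (1 - y) < w y0 - M - 1 := by
      have := mul_lt_mul_of_pos_left hlog hcpos
      rwa [mul_div_cancel₀ _ (ne_of_gt hcpos)] at this
    have hv : M + 1 < (1 - f y) / (1 - y) := by
      have hwy : w y = (1 - f y) / (1 - y) + c * Real.log (1 - y) := rfl
      have h1 : w y0 ≤ (1 - f y) / (1 - y) + c * Real.log (1 - y) := hwy ▸ hwmono
      clear_value w c y0 y1
      linarith [h1, hclog]
    have hfy : (M + 1) * (1 - y) < 1 - f y := (lt_div_iff₀ hs).mp hv
    have hhy := hlip y ⟨by linarith, hylt1.le⟩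
    nlinarith [hfy, hhy, hs]
end
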